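/- arXiv:math/0408165 — 2 statements merged into one kernel-verified Lean document; each statement's English description precedes it below -/
import Mathlib

section
/- Let h be analytic in a closed disk of radius r > 0 centered at z₀ with h(z₀) ≠ 0. Then there exist r₀ ∈ (0, r] and ε₀ > 0 such that for each ε with 0 < ε < ε₀, the equation (z - z₀)² = ε·h(z) has precisely two distinct solutions in D(z₀, r₀), each of the form z = z₀ ± √ε·√(h(z₀)) + O(ε). -/
open Metric Set Complex

lemma exists_fixedPoint_halfLip {K : Set ℂ} (hKc : IsClosed K)
    {Φ : ℂ → ℂ} (hmap : Set.MapsTo Φ K K)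
    (hlip : ∀ a ∈ K, ∀ b ∈ K, dist (Φ a) (Φ b) ≤ (1/2) * dist a b)
    {x : ℂ} (hx : x ∈ K) :
    ∃ y ∈ K, Φ y = y := by
  have hc : ContractingWith (1/2 : NNReal) (hmap.restrict Φ K K) := by
    constructor
    · exact NNReal.coe_lt_coe.mp (by norm_num)
    · apply LipschitzWith.of_dist_le_mul
      rintro ⟨a, ha⟩ ⟨b, hb⟩
      have := hlip a ha b hb
      simpa [Subtype.dist_eq] using this
  obtain ⟨y, hyK, hfy, -⟩ := hc.exists_fixedPoint' hKc.isComplete hmap hx (edist_ne_top _ _)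
  exact ⟨y, hyK, hfy⟩

set_option maxHeartbeats 1000000 in
/-- If `h` is analytic on the closed disk of radius `r > 0` centered at `z₀` and
`h z₀ ≠ 0`, then there are `r₀ ∈ (0, r]`, `ε₀ > 0` and a constant `C` such that for
every `0 < ε < ε₀` the equation `(z - z₀)² = ε h(z)` has precisely two distinct
solutions in `D(z₀, r₀)`, of the form `z₀ ± √ε √(h z₀) + O(ε)` (where `s` is a
fixed branch of the square root of `h z₀`). -/
theorem two_solutions_of_quadratic_perturbation
    (z₀ : ℂ) (r : ℝ) (hr : 0 < r) (h : ℂ → ℂ)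
    (hh : DifferentiableOn ℂ h (Metric.closedBall z₀ r))
    (hne : h z₀ ≠ 0) (s : ℂ) (hs : s ^ 2 = h z₀) :
    ∃ r₀ : ℝ, 0 < r₀ ∧ r₀ ≤ r ∧ ∃ ε₀ > (0 : ℝ), ∃ C : ℝ,
      ∀ ε : ℝ, 0 < ε → ε < ε₀ →
        ∃ z₁ z₂ : ℂ, z₁ ≠ z₂ ∧
          (z₁ ∈ Metric.ball z₀ r₀ ∧ (z₁ - z₀) ^ 2 = (ε : ℂ) * h z₁) ∧
          (z₂ ∈ Metric.ball z₀ r₀ ∧ (z₂ - z₀) ^ 2 = (ε : ℂ) * h z₂) ∧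
          (∀ z : ℂ, z ∈ Metric.ball z₀ r₀ → (z - z₀) ^ 2 = (ε : ℂ) * h z →
            z = z₁ ∨ z = z₂) ∧
          ‖z₁ - (z₀ + (Real.sqrt ε : ℂ) * s)‖ ≤ C * ε ∧
          ‖z₂ - (z₀ - (Real.sqrt ε : ℂ) * s)‖ ≤ C * ε := by
  have hs0 : s ≠ 0 := fun h0 => hne (by rw [← hs, h0]; ring)
  have hnorm0 : (0:ℝ) < ‖h z₀‖ := norm_pos_iff.mpr hne
  -- continuity of h at z₀
  have hball_nhds : Metric.closedBall z₀ r ∈ nhds z₀ := Metric.closedBall_mem_nhds z₀ hr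
  have hca : ContinuousAt h z₀ := (hh.differentiableAt hball_nhds).continuousAt
  obtain ⟨δ₁, hδ₁pos, hδ₁⟩ := Metric.continuousAt_iff.mp hca (‖h z₀‖/2) (by positivity)
  set r₁ : ℝ := min r (δ₁/2) with hr₁def
  have hr₁pos : 0 < r₁ := lt_min hr (by positivity)
  have hr₁r : r₁ ≤ r := min_le_left _ _
  -- on closedBall z₀ r₁, h z / h z₀ is close to 1
  have hclose : ∀ z ∈ Metric.closedBall z₀ r₁, ‖h z / h z₀ - 1‖ ≤ 1/2 := by
    intro z hz
    have hzd : dist z z₀ < δ₁ := lt_of_le_of_lt (mem_closedBall.mp hz)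
      (lt_of_le_of_lt (min_le_right _ _) (by linarith))
    have := hδ₁ hzd
    rw [dist_eq_norm] at this
    have heq : h z / h z₀ - 1 = (h z - h z₀) / h z₀ := by
      field_simp
    rw [heq, norm_div]
    rw [div_le_div_iff₀ hnorm0 (by norm_num : (0:ℝ) < 2)] at *
    calc ‖h z - h z₀‖ * 2 ≤ (‖h z₀‖/2) * 2 := by nlinarith [norm_nonneg (h z - h z₀)]
      _ = 1 * ‖h z₀‖ := by ring
  have hslit : ∀ z ∈ Metric.closedBall z₀ r₁, h z / h z₀ ∈ Complex.slitPlane := by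
    intro z hz
    have h1 := hclose z hz
    have h2 : |(h z / h z₀ - 1).re| ≤ 1/2 := le_trans (Complex.abs_re_le_norm _) h1
    left
    have : (h z / h z₀).re = 1 + (h z / h z₀ - 1).re := by simp
    rw [this]
    cases abs_le.mp h2 with
    | intro hl hr => linarith
  have hhz : ∀ z ∈ Metric.closedBall z₀ r₁, h z ≠ 0 := by
    intro z hz h0
    have := hslit z hz
    rw [h0, zero_div] at this
    exact Complex.slitPlane_ne_zero this rfl
  -- the square root function
  set g : ℂ → ℂ := fun z => s * Complex.exp ((1/2 : ℂ) * Complex.log (h z / h z₀)) with hgdef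
  have hg0 : g z₀ = s := by
    simp [hgdef, div_self hne, Complex.log_one]
  have hgsq : ∀ z ∈ Metric.closedBall z₀ r₁, g z ^ 2 = h z := by
    intro z hz
    have hz0 : h z / h z₀ ≠ 0 := div_ne_zero (hhz z hz) hne
    have : g z ^ 2 = s ^ 2 * Complex.exp ((1/2:ℂ) * Complex.log (h z / h z₀)
        + (1/2:ℂ) * Complex.log (h z / h z₀)) := by
      rw [Complex.exp_add]; ring
    rw [this, hs]
    have : (1/2:ℂ) * Complex.log (h z / h z₀) + (1/2:ℂ) * Complex.log (h z / h z₀)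
        = Complex.log (h z / h z₀) := by ring
    rw [this, Complex.exp_log hz0]
    field_simp
  -- differentiability of g on the open ball
  have hgd : ∀ z ∈ Metric.ball z₀ r₁, DifferentiableAt ℂ g z := by
    intro z hz
    have hzball : z ∈ Metric.ball z₀ r := Metric.ball_subset_ball hr₁r hz
    have hzr : Metric.closedBall z₀ r ∈ nhds z :=
      Filter.mem_of_superset (Metric.isOpen_ball.mem_nhds hzball) Metric.ball_subset_closedBall
    have hhd : DifferentiableAt ℂ h z := hh.differentiableAt hzr
    have hdiv : DifferentiableAt ℂ (fun w => h w / h z₀) z := hhd.div_const _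
    have hlog : DifferentiableAt ℂ (fun w => Complex.log (h w / h z₀)) z :=
      hdiv.clog (hslit z (Metric.ball_subset_closedBall hz))
    exact ((hlog.const_mul (1/2:ℂ)).cexp).const_mul s
  -- derivative of g is continuous on the open ball
  have hganal : AnalyticOnNhd ℂ g (Metric.ball z₀ r₁) :=
    (DifferentiableOn.analyticOnNhd (fun z hz => (hgd z hz).differentiableWithinAt)
      Metric.isOpen_ball)
  have hderivcont : ContinuousOn (deriv g) (Metric.ball z₀ r₁) :=
    (hganal.deriv).continuousOn
  have hgcont : ContinuousOn g (Metric.ball z₀ r₁) :=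
    fun z hz => (hgd z hz).continuousAt.continuousWithinAt
  -- compact set
  set r₂ : ℝ := r₁ / 2 with hr₂def
  have hr₂pos : 0 < r₂ := by positivity
  set K : Set ℂ := Metric.closedBall z₀ r₂ with hKdef
  have hKsub : K ⊆ Metric.ball z₀ r₁ := Metric.closedBall_subset_ball (by linarith)
  have hKcompact : IsCompact K := isCompact_closedBall _ _
  have hz₀K : z₀ ∈ K := Metric.mem_closedBall_self (le_of_lt hr₂pos)
  obtain ⟨L₀, hL₀⟩ := hKcompact.exists_bound_of_continuousOn (hderivcont.mono hKsub)
  obtain ⟨M₀, hM₀⟩ := hKcompact.exists_bound_of_continuousOn (hgcont.mono hKsub)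
  set L : ℝ := max L₀ 1 with hLdef
  set M : ℝ := max M₀ 1 with hMdef
  have hL1 : (1:ℝ) ≤ L := le_max_right _ _
  have hM1 : (1:ℝ) ≤ M := le_max_right _ _
  have hLpos : (0:ℝ) < L := lt_of_lt_of_le one_pos hL1
  have hMpos : (0:ℝ) < M := lt_of_lt_of_le one_pos hM1
  have hLb : ∀ z ∈ K, ‖deriv g z‖ ≤ L := fun z hz => le_trans (hL₀ z hz) (le_max_left _ _)
  have hMb : ∀ z ∈ K, ‖g z‖ ≤ M := fun z hz => le_trans (hM₀ z hz) (le_max_left _ _)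
  -- Lipschitz bound on K
  have hlipg : ∀ a ∈ K, ∀ b ∈ K, ‖g a - g b‖ ≤ L * ‖a - b‖ := by
    intro a ha b hb
    exact (convex_closedBall z₀ r₂).norm_image_sub_le_of_norm_deriv_le
      (fun x hx => hgd x (hKsub hx)) hLb hb ha
  have hKsub' : K ⊆ Metric.closedBall z₀ r₁ :=
    subset_trans hKsub Metric.ball_subset_closedBall
  -- choose ε₀
  set ε₀ : ℝ := min ((r₂ / (2*M))^2) ((1/(2*L))^2) with hε₀def
  have hε₀pos : 0 < ε₀ := lt_min (by positivity) (by positivity)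
  refine ⟨r₂, hr₂pos, le_trans (by rw [hr₂def]; linarith) hr₁r, ε₀, hε₀pos, L*M, ?_⟩
  intro ε hε hεlt
  set δ : ℝ := Real.sqrt ε with hδdef
  have hδpos : 0 < δ := Real.sqrt_pos.mpr hε
  have hδ1 : δ < r₂/(2*M) := by
    have h2 := Real.sqrt_lt_sqrt hε.le (lt_of_lt_of_le hεlt (min_le_left _ _))
    rwa [Real.sqrt_sq (by positivity)] at h2
  have hδ2 : δ < 1/(2*L) := by
    have h2 := Real.sqrt_lt_sqrt hε.le (lt_of_lt_of_le hεlt (min_le_right _ _))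
    rwa [Real.sqrt_sq (by positivity)] at h2
  have hδM : δ * M ≤ r₂/2 := by
    have h2 : δ * M ≤ (r₂/(2*M)) * M := mul_le_mul_of_nonneg_right hδ1.le hMpos.le
    calc δ * M ≤ (r₂/(2*M)) * M := h2
      _ = r₂/2 := by field_simp
  have hδL : δ * L ≤ 1/2 := by
    have h2 : δ * L ≤ (1/(2*L)) * L := mul_le_mul_of_nonneg_right hδ2.le hLpos.le
    calc δ * L ≤ (1/(2*L)) * L := h2
      _ = 1/2 := by field_simp
  have hδnorm : ‖(δ : ℂ)‖ = δ := by
    rw [Complex.norm_real, Real.norm_eq_abs, _root_.abs_of_nonneg hδpos.le]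
  have hδsq : (δ : ℂ)^2 = (ε : ℂ) := by
    rw [← Complex.ofReal_pow, Real.sq_sqrt hε.le]
  have hδC0 : (δ : ℂ) ≠ 0 := by
    simp only [ne_eq, Complex.ofReal_eq_zero]
    exact hδpos.ne'
  -- the two contractions
  set Φp : ℂ → ℂ := fun z => z₀ + (δ:ℂ) * g z with hΦpdef
  set Φm : ℂ → ℂ := fun z => z₀ - (δ:ℂ) * g z with hΦmdef
  have hnormδg : ∀ z ∈ K, ‖(δ:ℂ) * g z‖ ≤ r₂/2 := by
    intro z hz
    rw [norm_mul, hδnorm]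
    exact le_trans (mul_le_mul_of_nonneg_left (hMb z hz) hδpos.le) hδM
  have hmapp : Set.MapsTo Φp K K := by
    intro z hz
    simp only [hKdef, Metric.mem_closedBall, hΦpdef, dist_eq_norm, add_sub_cancel_left]
    exact le_trans (hnormδg z hz) (by linarith)
  have hmapm : Set.MapsTo Φm K K := by
    intro z hz
    simp only [hKdef, Metric.mem_closedBall, hΦmdef, dist_eq_norm, sub_sub_cancel_left,
      norm_neg]
    exact le_trans (hnormδg z hz) (by linarith)
  have hlipδ : ∀ a ∈ K, ∀ b ∈ K, ‖(δ:ℂ) * g a - (δ:ℂ) * g b‖ ≤ (1/2) * ‖a - b‖ := by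
    intro a ha b hb
    rw [← mul_sub, norm_mul, hδnorm]
    calc δ * ‖g a - g b‖ ≤ δ * (L * ‖a - b‖) :=
          mul_le_mul_of_nonneg_left (hlipg a ha b hb) hδpos.le
      _ = (δ * L) * ‖a - b‖ := by ring
      _ ≤ (1/2) * ‖a - b‖ := mul_le_mul_of_nonneg_right hδL (norm_nonneg _)
  have hlipp : ∀ a ∈ K, ∀ b ∈ K, dist (Φp a) (Φp b) ≤ (1/2) * dist a b := by
    intro a ha b hb
    simp only [hΦpdef, dist_eq_norm, add_sub_add_left_eq_sub]
    exact hlipδ a ha b hb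
  have hlipm : ∀ a ∈ K, ∀ b ∈ K, dist (Φm a) (Φm b) ≤ (1/2) * dist a b := by
    intro a ha b hb
    simp only [hΦmdef, dist_eq_norm]
    have heq : z₀ - (δ:ℂ) * g a - (z₀ - (δ:ℂ) * g b) = -((δ:ℂ) * g a - (δ:ℂ) * g b) := by ring
    rw [heq, norm_neg]
    exact hlipδ a ha b hb
  obtain ⟨z₁, hz₁K, hz₁fix⟩ :=
    exists_fixedPoint_halfLip Metric.isClosed_closedBall hmapp hlipp hz₀K
  obtain ⟨z₂, hz₂K, hz₂fix⟩ :=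
    exists_fixedPoint_halfLip Metric.isClosed_closedBall hmapm hlipm hz₀K
  have hz₁eq : z₁ - z₀ = (δ:ℂ) * g z₁ := by
    conv_lhs => rw [← hz₁fix]
    simp [hΦpdef]
  have hz₂eq : z₂ - z₀ = -((δ:ℂ) * g z₂) := by
    conv_lhs => rw [← hz₂fix]
    simp [hΦmdef]
  have hz₁dist : ‖z₁ - z₀‖ ≤ δ * M := by
    rw [hz₁eq, norm_mul, hδnorm]
    exact mul_le_mul_of_nonneg_left (hMb z₁ hz₁K) hδpos.le
  have hz₂dist : ‖z₂ - z₀‖ ≤ δ * M := by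
    rw [hz₂eq, norm_neg, norm_mul, hδnorm]
    exact mul_le_mul_of_nonneg_left (hMb z₂ hz₂K) hδpos.le
  have hz₁ball : z₁ ∈ Metric.ball z₀ r₂ := by
    rw [Metric.mem_ball, dist_eq_norm]
    linarith
  have hz₂ball : z₂ ∈ Metric.ball z₀ r₂ := by
    rw [Metric.mem_ball, dist_eq_norm]
    linarith
  have hz₁sol : (z₁ - z₀)^2 = (ε:ℂ) * h z₁ := by
    rw [hz₁eq, mul_pow, hδsq, hgsq z₁ (hKsub' hz₁K)]
  have hz₂sol : (z₂ - z₀)^2 = (ε:ℂ) * h z₂ := by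
    rw [hz₂eq, neg_pow, mul_pow, hδsq, hgsq z₂ (hKsub' hz₂K)]
    ring
  have hz₁ne₂ : z₁ ≠ z₂ := by
    intro hcontra
    rw [hcontra] at hz₁eq
    have h1 : (δ:ℂ) * g z₂ = -((δ:ℂ) * g z₂) := hz₁eq.symm.trans hz₂eq
    have h4 : (δ:ℂ) * g z₂ = 0 := CharZero.eq_neg_self_iff.mp h1
    have h2 : g z₂ = 0 := by
      rcases mul_eq_zero.mp h4 with h5 | h5
      · exact absurd h5 hδC0
      · exact h5
    have h6 : h z₂ = 0 := by rw [← hgsq z₂ (hKsub' hz₂K), h2]; ring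
    exact hhz z₂ (hKsub' hz₂K) h6
  -- uniqueness
  have huniq : ∀ z ∈ Metric.ball z₀ r₂, (z - z₀)^2 = (ε:ℂ) * h z → z = z₁ ∨ z = z₂ := by
    intro z hzball hzsol
    have hzK : z ∈ K := Metric.ball_subset_closedBall hzball
    have h1 : g z ^ 2 = h z := hgsq z (hKsub' hzK)
    have hfac : (z - z₀ - (δ:ℂ) * g z) * (z - z₀ + (δ:ℂ) * g z) = 0 := by
      linear_combination hzsol - (ε:ℂ) * h1 - (g z)^2 * hδsq
    rcases mul_eq_zero.mp hfac with hc | hc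
    · left
      have hfix : Φp z = z := by
        simp only [hΦpdef]
        linear_combination -hc
      have hd : dist z z₁ ≤ (1/2) * dist z z₁ := by
        conv_lhs => rw [← hfix, ← hz₁fix]
        exact hlipp z hzK z₁ hz₁K
      have : dist z z₁ = 0 := by
        have := dist_nonneg (x := z) (y := z₁)
        linarith
      exact dist_eq_zero.mp this
    · right
      have hfix : Φm z = z := by
        simp only [hΦmdef]
        linear_combination -hc
      have hd : dist z z₂ ≤ (1/2) * dist z z₂ := by
        conv_lhs => rw [← hfix, ← hz₂fix]
        exact hlipm z hzK z₂ hz₂K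
      have : dist z z₂ = 0 := by
        have := dist_nonneg (x := z) (y := z₂)
        linarith
      exact dist_eq_zero.mp this
  -- error bounds
  have hδδ : δ * δ = ε := Real.mul_self_sqrt hε.le
  have herr1 : ‖z₁ - (z₀ + (δ:ℂ) * s)‖ ≤ L * M * ε := by
    have heq : z₁ - (z₀ + (δ:ℂ) * s) = (δ:ℂ) * (g z₁ - g z₀) := by
      rw [hg0]; linear_combination hz₁eq
    rw [heq, norm_mul, hδnorm]
    calc δ * ‖g z₁ - g z₀‖ ≤ δ * (L * ‖z₁ - z₀‖) :=
          mul_le_mul_of_nonneg_left (hlipg z₁ hz₁K z₀ hz₀K) hδpos.le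
      _ ≤ δ * (L * (δ * M)) := by
          exact mul_le_mul_of_nonneg_left
            (mul_le_mul_of_nonneg_left hz₁dist hLpos.le) hδpos.le
      _ = L * M * (δ * δ) := by ring
      _ = L * M * ε := by rw [hδδ]
  have herr2 : ‖z₂ - (z₀ - (δ:ℂ) * s)‖ ≤ L * M * ε := by
    have heq : z₂ - (z₀ - (δ:ℂ) * s) = -((δ:ℂ) * (g z₂ - g z₀)) := by
      rw [hg0]; linear_combination hz₂eq
    rw [heq, norm_neg, norm_mul, hδnorm]
    calc δ * ‖g z₂ - g z₀‖ ≤ δ * (L * ‖z₂ - z₀‖) :=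
          mul_le_mul_of_nonneg_left (hlipg z₂ hz₂K z₀ hz₀K) hδpos.le
      _ ≤ δ * (L * (δ * M)) := by
          exact mul_le_mul_of_nonneg_left
            (mul_le_mul_of_nonneg_left hz₂dist hLpos.le) hδpos.le
      _ = L * M * (δ * δ) := by ring
      _ = L * M * ε := by rw [hδδ]
  exact ⟨z₁, z₂, hz₁ne₂, ⟨hz₁ball, hz₁sol⟩, ⟨hz₂ball, hz₂sol⟩, huniq, herr1, herr2⟩
end

section
/- Let h be analytic on a closed disk centered at a real z₀, real on reals, with h(z₀) ≠ 0. For small ε > 0 the equation (z - z₀)² = ε·h(z) has exactly two solutions near z₀; if h(z₀) > 0 both solutions are real, and if h(z₀) < 0 both solutions are non-real (complex conjugates of each other). -/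
open Filter Metric Complex Set Topology

lemma conj_conj_hasDerivAt {f : ℂ → ℂ} {z d : ℂ} (hf : HasDerivAt f d ((starRingEnd ℂ) z)) :
    HasDerivAt (fun w => (starRingEnd ℂ) (f ((starRingEnd ℂ) w))) ((starRingEnd ℂ) d) z := by
  rw [hasDerivAt_iff_tendsto_slope] at hf ⊢
  have hconj : Continuous (starRingEnd ℂ) := Complex.continuous_conj
  have h1 : Tendsto (starRingEnd ℂ) (𝓝[≠] z) (𝓝[≠] ((starRingEnd ℂ) z)) := by
    refine hconj.continuousWithinAt.tendsto_nhdsWithin ?_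
    intro w hw
    simp only [Set.mem_compl_iff, Set.mem_singleton_iff] at *
    exact fun e => hw ((starRingEnd ℂ).injective e)
  have h2 : Tendsto (starRingEnd ℂ) (𝓝 d) (𝓝 ((starRingEnd ℂ) d)) := hconj.tendsto d
  refine (h2.comp (hf.comp h1)).congr' ?_
  filter_upwards [self_mem_nhdsWithin] with w hw
  simp only [Function.comp_apply, slope_def_field]
  rw [← map_sub, ← map_sub, map_div₀, Complex.conj_conj]

lemma schwarz_reflect (z₀ : ℝ) (r : ℝ) (hr : 0 < r) (h : ℂ → ℂ)
    (hh : DifferentiableOn ℂ h (Metric.closedBall (z₀ : ℂ) r))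
    (hreal : ∀ x : ℝ, (x : ℂ) ∈ Metric.closedBall (z₀ : ℂ) r → (h x).im = 0) :
    ∀ z ∈ Metric.ball (z₀ : ℂ) r, h ((starRingEnd ℂ) z) = (starRingEnd ℂ) (h z) := by
  have hball : ∀ z : ℂ, z ∈ Metric.ball (z₀ : ℂ) r → (starRingEnd ℂ) z ∈ Metric.ball (z₀ : ℂ) r := by
    intro z hz
    rw [Metric.mem_ball, Complex.dist_eq] at hz ⊢
    rwa [show (starRingEnd ℂ) z - (z₀ : ℂ) = (starRingEnd ℂ) (z - z₀) by
      rw [map_sub, Complex.conj_ofReal], Complex.norm_conj]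
  set g : ℂ → ℂ := fun z => (starRingEnd ℂ) (h ((starRingEnd ℂ) z)) with hgdef
  have hfa : AnalyticOnNhd ℂ h (Metric.ball (z₀ : ℂ) r) :=
    (hh.mono Metric.ball_subset_closedBall).analyticOnNhd Metric.isOpen_ball
  have hga : AnalyticOnNhd ℂ g (Metric.ball (z₀ : ℂ) r) := by
    refine DifferentiableOn.analyticOnNhd ?_ Metric.isOpen_ball
    intro z hz
    have hmem : Metric.closedBall (z₀ : ℂ) r ∈ 𝓝 ((starRingEnd ℂ) z) :=
      Filter.mem_of_superset (Metric.isOpen_ball.mem_nhds (hball z hz))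
        Metric.ball_subset_closedBall
    exact (conj_conj_hasDerivAt (hh.differentiableAt hmem).hasDerivAt).differentiableAt.differentiableWithinAt
  have hu : ∀ n : ℕ, ((z₀ + r / (n + 1) : ℝ) : ℂ) ∈ Metric.closedBall (z₀ : ℂ) r := by
    intro n
    rw [Metric.mem_closedBall, Complex.dist_eq]
    have h1 : (0:ℝ) < (n:ℝ) + 1 := by positivity
    rw [show ((z₀ + r / (n + 1) : ℝ) : ℂ) - (z₀ : ℂ) = ((r / (n+1) : ℝ) : ℂ) by
      push_cast; ring]
    rw [Complex.norm_real, Real.norm_eq_abs, abs_of_pos (by positivity)]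
    rw [div_le_iff₀ h1]
    nlinarith
  have heq : ∀ n : ℕ, h ((z₀ + r / (n + 1) : ℝ) : ℂ) = g ((z₀ + r / (n + 1) : ℝ) : ℂ) := by
    intro n
    simp only [hgdef, Complex.conj_ofReal]
    exact ((Complex.conj_eq_iff_im).2 (hreal _ (hu n))).symm
  have htend : Tendsto (fun n : ℕ => ((z₀ + r / (n + 1) : ℝ) : ℂ)) atTop (𝓝[≠] (z₀ : ℂ)) := by
    refine tendsto_nhdsWithin_of_tendsto_nhds_of_eventually_within _ ?_ ?_
    · have h0 : Tendsto (fun n : ℕ => r / ((n:ℝ) + 1)) atTop (𝓝 0) := by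
        have := ((tendsto_inv_atTop_nhds_zero_nat (𝕜 := ℝ)).comp (tendsto_add_atTop_nat 1)).const_mul r
        simpa [div_eq_mul_inv, Function.comp] using this
      have h1 : Tendsto (fun n : ℕ => z₀ + r / ((n:ℝ) + 1)) atTop (𝓝 z₀) := by
        simpa using tendsto_const_nhds.add h0
      exact (Complex.continuous_ofReal.tendsto z₀).comp h1
    · refine Filter.Eventually.of_forall fun n => ?_
      simp only [Set.mem_compl_iff, Set.mem_singleton_iff]
      intro e
      have : z₀ + r / ((n:ℝ) + 1) = z₀ := by exact_mod_cast e
      have h1 : (0:ℝ) < r / ((n:ℝ)+1) := by positivity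
      linarith
  have hfreq : ∃ᶠ z in 𝓝[≠] (z₀ : ℂ), h z = g z :=
    htend.frequently (Filter.Frequently.of_forall heq)
  have hEq : Set.EqOn h g (Metric.ball (z₀ : ℂ) r) :=
    hfa.eqOn_of_preconnected_of_frequently_eq hga
      (convex_ball _ _).isPreconnected (Metric.mem_ball_self hr) hfreq
  intro z hz
  have h1 := hEq (hball z hz)
  simp only [hgdef, Complex.conj_conj] at h1
  exact h1

set_option maxHeartbeats 1000000 in
/-- Reality of the two solutions of `(z - z₀)² = ε h(z)` near a real `z₀`, for `h`
analytic on a closed disk about `z₀`, real on reals, with `h z₀ ≠ 0`: for small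
`ε > 0` there are exactly two solutions near `z₀`; if `h z₀ > 0` both are real,
and if `h z₀ < 0` both are non-real complex conjugates of each other. -/
theorem two_solutions_real_or_conjugate
    (z₀ : ℝ) (r : ℝ) (hr : 0 < r) (h : ℂ → ℂ)
    (hh : DifferentiableOn ℂ h (Metric.closedBall (z₀ : ℂ) r))
    (hreal : ∀ x : ℝ, (x : ℂ) ∈ Metric.closedBall (z₀ : ℂ) r → (h x).im = 0)
    (hne : h z₀ ≠ 0) :
    ∃ r₀ > (0 : ℝ), ∃ ε₀ > (0 : ℝ), ∀ ε : ℝ, 0 < ε → ε < ε₀ →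
      ∃ z₁ z₂ : ℂ, z₁ ≠ z₂ ∧
        (z₁ ∈ Metric.ball (z₀ : ℂ) r₀ ∧ (z₁ - z₀) ^ 2 = (ε : ℂ) * h z₁) ∧
        (z₂ ∈ Metric.ball (z₀ : ℂ) r₀ ∧ (z₂ - z₀) ^ 2 = (ε : ℂ) * h z₂) ∧
        (∀ z : ℂ, z ∈ Metric.ball (z₀ : ℂ) r₀ → (z - z₀) ^ 2 = (ε : ℂ) * h z →
          z = z₁ ∨ z = z₂) ∧
        (0 < (h z₀).re → z₁.im = 0 ∧ z₂.im = 0) ∧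
        ((h z₀).re < 0 → z₁.im ≠ 0 ∧ z₂ = (starRingEnd ℂ) z₁) := by
  have hz₀mem : (z₀ : ℂ) ∈ Metric.closedBall (z₀ : ℂ) r := Metric.mem_closedBall_self hr.le
  have hcim : (h z₀).im = 0 := hreal z₀ hz₀mem
  set c : ℝ := (h z₀).re with hcdef
  have hc : h z₀ = (c : ℂ) := Complex.ext (by simp [hcdef]) (by simp [hcim])
  have hcne : c ≠ 0 := fun e => hne (by rw [hc, e]; simp)
  have hrefl := schwarz_reflect z₀ r hr h hh hreal
  -- continuity radius ρ₁
  have hcont : ContinuousAt h z₀ :=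
    (hh.differentiableAt (Metric.closedBall_mem_nhds _ hr)).continuousAt
  obtain ⟨ρ₁, hρ₁pos, hρ₁r, hρ₁⟩ : ∃ ρ₁ > 0, ρ₁ < r ∧
      ∀ z ∈ Metric.closedBall (z₀ : ℂ) ρ₁, ‖h z - h z₀‖ < |c| / 2 := by
    obtain ⟨δ, hδpos, hδ⟩ := Metric.continuousAt_iff.1 hcont (|c| / 2)
      (by positivity)
    refine ⟨min (δ / 2) (r / 2), by positivity, ?_, fun z hz => ?_⟩
    · calc min (δ/2) (r/2) ≤ r/2 := min_le_right _ _
        _ < r := by linarith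
    · rw [Metric.mem_closedBall] at hz
      have : dist z (z₀ : ℂ) < δ := lt_of_le_of_lt hz
        (lt_of_le_of_lt (min_le_left _ _) (by linarith))
      have := hδ this
      rwa [Complex.dist_eq] at this
  -- square root s₀ of h z₀
  set s₀ : ℂ := if 0 < c then ((Real.sqrt c : ℝ) : ℂ)
    else ((Real.sqrt (-c) : ℝ) : ℂ) * Complex.I with hs₀def
  have hs₀sq : s₀ ^ 2 = (c : ℂ) := by
    rcases lt_or_gt_of_ne hcne with hneg | hpos
    · rw [hs₀def, if_neg (by linarith)]
      rw [mul_pow, Complex.I_sq, ← Complex.ofReal_pow, Real.sq_sqrt (by linarith)]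
      push_cast; ring
    · rw [hs₀def, if_pos hpos, ← Complex.ofReal_pow, Real.sq_sqrt hpos.le]
  have hs₀ne : s₀ ≠ 0 := by
    intro e
    have h0 : (c : ℂ) = 0 := by rw [← hs₀sq, e]; ring
    exact hcne (by exact_mod_cast h0)
  -- the square-root function s
  set s : ℂ → ℂ := fun z => s₀ * Complex.exp (Complex.log (h z / (c : ℂ)) / 2) with hsdef
  have hφ : ∀ z ∈ Metric.closedBall (z₀ : ℂ) ρ₁, ‖h z / (c : ℂ) - 1‖ < 1 / 2 := by
    intro z hz
    have h1 : h z / (c : ℂ) - 1 = (h z - h z₀) / (c : ℂ) := by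
      rw [hc, sub_div, div_self (Complex.ofReal_ne_zero.mpr hcne)]
    rw [h1, norm_div, Complex.norm_real, Real.norm_eq_abs, div_lt_iff₀ (by positivity : (0:ℝ) < |c|)]
    have := hρ₁ z hz
    linarith
  have hφre : ∀ z ∈ Metric.closedBall (z₀ : ℂ) ρ₁, 1 / 2 ≤ (h z / (c : ℂ)).re := by
    intro z hz
    have h1 := hφ z hz
    have h2 : |(h z / (c : ℂ) - 1).re| ≤ ‖h z / (c : ℂ) - 1‖ :=
      Complex.abs_re_le_norm _
    have h3 : (h z / (c : ℂ) - 1).re = (h z / (c : ℂ)).re - 1 := by simp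
    rw [h3] at h2
    have := abs_le.1 h2
    linarith [this.1]
  have hslit : ∀ z ∈ Metric.closedBall (z₀ : ℂ) ρ₁, h z / (c : ℂ) ∈ Complex.slitPlane := by
    intro z hz
    exact Complex.mem_slitPlane_iff.2 (Or.inl (by linarith [hφre z hz]))
  have hsq : ∀ z ∈ Metric.closedBall (z₀ : ℂ) ρ₁, s z ^ 2 = h z := by
    intro z hz
    rw [hsdef]
    rw [mul_pow, hs₀sq, ← Complex.exp_nat_mul]
    have h1 : (2 : ℂ) * (Complex.log (h z / (c : ℂ)) / 2) = Complex.log (h z / (c : ℂ)) := by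
      ring
    push_cast [h1]
    rw [Complex.exp_log (Complex.slitPlane_ne_zero (hslit z hz))]
    rw [mul_comm]; exact div_mul_cancel₀ _ (Complex.ofReal_ne_zero.mpr hcne)
  have hsne : ∀ z ∈ Metric.closedBall (z₀ : ℂ) ρ₁, s z ≠ 0 := by
    intro z hz
    exact mul_ne_zero hs₀ne (Complex.exp_ne_zero _)
  have hballsub : Metric.ball (z₀ : ℂ) ρ₁ ⊆ Metric.closedBall (z₀ : ℂ) r :=
    subset_trans (Metric.ball_subset_ball hρ₁r.le) Metric.ball_subset_closedBall
  have hsdiff : DifferentiableOn ℂ s (Metric.ball (z₀ : ℂ) ρ₁) := by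
    intro z hz
    apply DifferentiableAt.differentiableWithinAt
    have h1 : DifferentiableAt ℂ h z := hh.differentiableAt
      (Filter.mem_of_superset (Metric.isOpen_ball.mem_nhds hz) hballsub)
    have h2 : DifferentiableAt ℂ (fun z => h z / (c : ℂ)) z := h1.div_const _
    have h3 : DifferentiableAt ℂ (fun z => Complex.log (h z / (c : ℂ))) z :=
      h2.clog (hslit z (Metric.ball_subset_closedBall hz))
    exact (differentiableAt_const s₀).mul ((h3.div_const 2).cexp)
  have hsan : AnalyticOnNhd ℂ s (Metric.ball (z₀ : ℂ) ρ₁) :=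
    hsdiff.analyticOnNhd Metric.isOpen_ball
  have hderivcont : ContinuousAt (fderiv ℂ s) z₀ :=
    ((hsan.fderiv) (z₀ : ℂ) (Metric.mem_ball_self hρ₁pos)).continuousAt
  set B : ℝ := ‖fderiv ℂ s (z₀ : ℂ)‖ + 1 with hBdef
  have hBpos : 0 < B := by positivity
  obtain ⟨ρ₂, hρ₂pos, hρ₂lt, hB⟩ : ∃ ρ₂ > 0, ρ₂ < ρ₁ ∧
      ∀ z ∈ Metric.closedBall (z₀ : ℂ) ρ₂, ‖fderiv ℂ s z‖ ≤ B := by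
    obtain ⟨δ, hδpos, hδ⟩ := Metric.continuousAt_iff.1 hderivcont 1 one_pos
    refine ⟨min (δ / 2) (ρ₁ / 2), by positivity, ?_, fun z hz => ?_⟩
    · calc min (δ/2) (ρ₁/2) ≤ ρ₁/2 := min_le_right _ _
        _ < ρ₁ := by linarith
    · rw [Metric.mem_closedBall] at hz
      have h1 : dist z (z₀ : ℂ) < δ := lt_of_le_of_lt hz
        (lt_of_le_of_lt (min_le_left _ _) (by linarith))
      have h2 := hδ h1
      rw [dist_eq_norm] at h2
      calc ‖fderiv ℂ s z‖ = ‖fderiv ℂ s (z₀:ℂ) + (fderiv ℂ s z - fderiv ℂ s (z₀:ℂ))‖ := by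
            rw [add_sub_cancel]
        _ ≤ ‖fderiv ℂ s (z₀:ℂ)‖ + ‖fderiv ℂ s z - fderiv ℂ s (z₀:ℂ)‖ := norm_add_le _ _
        _ ≤ B := by rw [hBdef]; linarith
  have hcbsub : Metric.closedBall (z₀ : ℂ) ρ₂ ⊆ Metric.closedBall (z₀ : ℂ) ρ₁ :=
    Metric.closedBall_subset_closedBall hρ₂lt.le
  have hcbball : Metric.closedBall (z₀ : ℂ) ρ₂ ⊆ Metric.ball (z₀ : ℂ) ρ₁ :=
    Metric.closedBall_subset_ball hρ₂lt
  have hLip : ∀ z ∈ Metric.closedBall (z₀ : ℂ) ρ₂, ∀ w ∈ Metric.closedBall (z₀ : ℂ) ρ₂,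
      ‖s z - s w‖ ≤ B * ‖z - w‖ := by
    intro z hz w hw
    exact (convex_closedBall _ _).norm_image_sub_le_of_norm_fderiv_le
      (fun x hx => (hsdiff.differentiableAt (Metric.isOpen_ball.mem_nhds (hcbball hx))))
      (fun x hx => hB x hx) hw hz
  set M : ℝ := ‖s (z₀ : ℂ)‖ + B * ρ₂ with hMdef
  have hM : ∀ z ∈ Metric.closedBall (z₀ : ℂ) ρ₂, ‖s z‖ ≤ M := by
    intro z hz
    have h1 := hLip z hz (z₀ : ℂ) (Metric.mem_closedBall_self hρ₂pos.le)
    have h2 : ‖z - (z₀ : ℂ)‖ ≤ ρ₂ := by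
      rw [Metric.mem_closedBall, Complex.dist_eq] at hz; exact hz
    calc ‖s z‖ = ‖s (z₀:ℂ) + (s z - s (z₀:ℂ))‖ := by rw [add_sub_cancel]
      _ ≤ ‖s (z₀:ℂ)‖ + ‖s z - s (z₀:ℂ)‖ := norm_add_le _ _
      _ ≤ ‖s (z₀:ℂ)‖ + B * ρ₂ := by
          have : B * ‖z - (z₀:ℂ)‖ ≤ B * ρ₂ := by nlinarith [norm_nonneg (z - (z₀:ℂ))]
          linarith
  have hMnn : 0 ≤ M := le_trans (norm_nonneg _) (hM (z₀:ℂ) (Metric.mem_closedBall_self hρ₂pos.le))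
  refine ⟨ρ₂, hρ₂pos, min ((ρ₂ / (M + 1)) ^ 2) ((1 / (B + 1)) ^ 2), by positivity, ?_⟩
  intro ε hε hεlt
  set q : ℝ := Real.sqrt ε with hqdef
  have hq0 : 0 < q := Real.sqrt_pos.2 hε
  have hq1 : q * M < ρ₂ := by
    have h1 : q < ρ₂ / (M + 1) := by
      have := lt_of_lt_of_le hεlt (min_le_left _ _)
      calc q = Real.sqrt ε := rfl
        _ < Real.sqrt ((ρ₂ / (M+1))^2) := Real.sqrt_lt_sqrt hε.le this
        _ = ρ₂ / (M+1) := Real.sqrt_sq (by positivity)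
    have h2 : q * (M + 1) < ρ₂ := (lt_div_iff₀ (by positivity)).1 h1
    nlinarith
  have hq2 : q * B < 1 := by
    have h1 : q < 1 / (B + 1) := by
      have := lt_of_lt_of_le hεlt (min_le_right _ _)
      calc q = Real.sqrt ε := rfl
        _ < Real.sqrt ((1 / (B+1))^2) := Real.sqrt_lt_sqrt hε.le this
        _ = 1 / (B+1) := Real.sqrt_sq (by positivity)
    have h2 : q * (B + 1) < 1 := (lt_div_iff₀ (by positivity)).1 h1
    nlinarith
  have hqsq : ((q : ℝ) : ℂ) ^ 2 = (ε : ℂ) := by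
    rw [← Complex.ofReal_pow, Real.sq_sqrt hε.le]
  -- fixed point existence for maps z ↦ z₀ + σ • s z
  have exists_fp : ∀ σ : ℂ, ‖σ‖ = q → ∀ S : Set ℂ, IsClosed S → (z₀ : ℂ) ∈ S →
      (∀ z ∈ Metric.closedBall (z₀:ℂ) ρ₂ ∩ S, (z₀:ℂ) + σ * s z ∈ S) →
      ∃ w, (w ∈ Metric.closedBall (z₀:ℂ) ρ₂ ∧ w ∈ S) ∧ w = (z₀:ℂ) + σ * s w ∧
        dist w (z₀:ℂ) ≤ q * M := by
    intro σ hσ S hS hz₀S hTS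
    set T : ℂ → ℂ := fun z => (z₀:ℂ) + σ * s z with hTdef
    set Sf : Set ℂ := Metric.closedBall (z₀:ℂ) ρ₂ ∩ S with hSfdef
    have hTnorm : ∀ z ∈ Metric.closedBall (z₀:ℂ) ρ₂, dist (T z) (z₀:ℂ) ≤ q * M := by
      intro z hz
      rw [hTdef]
      rw [Complex.dist_eq, add_sub_cancel_left, norm_mul, hσ]
      have := hM z hz
      exact mul_le_mul_of_nonneg_left this hq0.le
    have hmaps : Set.MapsTo T Sf Sf := by
      intro z hz
      refine ⟨?_, hTS z hz⟩
      rw [Metric.mem_closedBall]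
      exact le_trans (hTnorm z hz.1) hq1.le
    have hcomplete : IsComplete Sf := (Metric.isClosed_closedBall.inter hS).isComplete
    set K : NNReal := Real.toNNReal (q * B) with hKdef
    have hKcoe : (K : ℝ) = q * B := Real.coe_toNNReal _ (by positivity)
    have hKlt : K < 1 := by
      rw [hKdef, ← Real.toNNReal_one]
      exact (Real.toNNReal_lt_toNNReal_iff one_pos).2 hq2
    have hLipT : LipschitzOnWith K T Sf := by
      apply LipschitzOnWith.of_dist_le_mul
      intro x hx y hy
      rw [hTdef]
      rw [Complex.dist_eq,
        show (z₀:ℂ) + σ * s x - ((z₀:ℂ) + σ * s y) = σ * (s x - s y) by ring,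
        norm_mul, hσ, hKcoe, Complex.dist_eq]
      have h1 := hLip x hx.1 y hy.1
      calc q * ‖s x - s y‖ ≤ q * (B * ‖x - y‖) :=
            mul_le_mul_of_nonneg_left h1 hq0.le
        _ = q * B * ‖x - y‖ := by ring
    have hcw : ContractingWith K (hmaps.restrict T Sf Sf) :=
      ⟨hKlt, hmaps.lipschitzOnWith_iff_restrict.mp hLipT⟩
    have hmem : (z₀:ℂ) ∈ Sf := ⟨Metric.mem_closedBall_self hρ₂pos.le, hz₀S⟩
    obtain ⟨w, hwSf, hfix, -, -⟩ :=
      hcw.exists_fixedPoint' hcomplete hmaps hmem (edist_ne_top _ _)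
    refine ⟨w, ⟨hwSf.1, hwSf.2⟩, hfix.symm, ?_⟩
    have := hTnorm w hwSf.1
    rwa [show T w = w from hfix] at this
  -- uniqueness of fixed points
  have unique_fp : ∀ σ : ℂ, ‖σ‖ = q → ∀ u ∈ Metric.closedBall (z₀:ℂ) ρ₂,
      ∀ v ∈ Metric.closedBall (z₀:ℂ) ρ₂, u = (z₀:ℂ) + σ * s u → v = (z₀:ℂ) + σ * s v →
      u = v := by
    intro σ hσ u hu v hv he1 he2
    have hd : dist u v ≤ q * B * dist u v := by
      conv_lhs => rw [he1, he2]
      rw [Complex.dist_eq,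
        show (z₀:ℂ) + σ * s u - ((z₀:ℂ) + σ * s v) = σ * (s u - s v) by ring,
        norm_mul, hσ]
      have h1 := hLip u hu v hv
      calc q * ‖s u - s v‖ ≤ q * (B * ‖u - v‖) :=
            mul_le_mul_of_nonneg_left h1 hq0.le
        _ = q * B * dist u v := by rw [Complex.dist_eq]; ring
    have h0 : dist u v = 0 := by nlinarith [dist_nonneg (x := u) (y := v)]
    exact dist_eq_zero.1 h0
  have hεsub : ∀ z ∈ Metric.closedBall (z₀:ℂ) ρ₂, ((q:ℝ):ℂ)^2 * (s z)^2 = (ε:ℂ) * h z :=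
    fun z hz => by rw [hqsq, hsq z (hcbsub hz)]
  have hfactor : ∀ z ∈ Metric.ball (z₀:ℂ) ρ₂, (z - z₀)^2 = (ε:ℂ) * h z →
      z = (z₀:ℂ) + ((q:ℝ):ℂ) * s z ∨ z = (z₀:ℂ) + (-((q:ℝ):ℂ)) * s z := by
    intro z hz heqz
    have hz' : z ∈ Metric.closedBall (z₀:ℂ) ρ₂ := Metric.ball_subset_closedBall hz
    have h0 : (z - (z₀:ℂ) - ((q:ℝ):ℂ) * s z) * (z - (z₀:ℂ) + ((q:ℝ):ℂ) * s z) = 0 := by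
      have e1 := hεsub z hz'
      linear_combination heqz - e1
    rcases mul_eq_zero.1 h0 with h' | h'
    · left; linear_combination h'
    · right; linear_combination h'
  have habsq : ‖((q:ℝ):ℂ)‖ = q := by
    rw [Complex.norm_real, Real.norm_eq_abs, abs_of_pos hq0]
  have habsnq : ‖-((q:ℝ):ℂ)‖ = q := by
    rw [norm_neg, habsq]
  rcases lt_or_gt_of_ne hcne with hcneg | hcpos
  · -- h z₀ < 0 : conjugate pair of non-real solutions
    obtain ⟨w, ⟨hwcb, -⟩, hwfix, hwdist⟩ := exists_fp ((q:ℝ):ℂ) habsq Set.univ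
      isClosed_univ (Set.mem_univ _) (fun z _ => Set.mem_univ _)
    have hwball : w ∈ Metric.ball (z₀:ℂ) ρ₂ := by
      rw [Metric.mem_ball]; exact lt_of_le_of_lt hwdist hq1
    have hweq : (w - (z₀:ℂ))^2 = (ε:ℂ) * h w := by
      have h1 : w - (z₀:ℂ) = ((q:ℝ):ℂ) * s w := by linear_combination hwfix
      rw [h1, mul_pow]; exact hεsub w hwcb
    have hwim : w.im ≠ 0 := by
      intro him
      have hwx : w = ((w.re : ℝ) : ℂ) := Complex.ext rfl (by simp [him])
      have h1 : w - (z₀:ℂ) = ((w.re - z₀ : ℝ) : ℂ) := by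
        rw [Complex.ofReal_sub, ← hwx]
      have h2 := hweq
      rw [h1] at h2
      have h3 := congrArg Complex.re h2
      rw [← Complex.ofReal_pow] at h3
      rw [Complex.ofReal_re, Complex.re_ofReal_mul] at h3
      have hhre : (h w).re < 0 := by
        have ha := hρ₁ w (hcbsub hwcb)
        have hb : |(h w - h z₀).re| ≤ ‖h w - h z₀‖ := Complex.abs_re_le_norm _
        have hc' : (h w - h z₀).re = (h w).re - c := by simp [hcdef]
        rw [hc'] at hb
        have hd := (abs_le.1 (le_of_lt (lt_of_le_of_lt hb ha))).2
        rw [abs_of_neg hcneg] at hd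
        linarith
      nlinarith [sq_nonneg (w.re - z₀)]
    have hconjmem : ∀ u : ℂ, u ∈ Metric.ball (z₀:ℂ) ρ₂ →
        (starRingEnd ℂ) u ∈ Metric.ball (z₀:ℂ) ρ₂ := by
      intro u hu
      rw [Metric.mem_ball, Complex.dist_eq] at hu ⊢
      rwa [show (starRingEnd ℂ) u - (z₀:ℂ) = (starRingEnd ℂ) (u - z₀) by
        rw [map_sub, Complex.conj_ofReal], Complex.norm_conj]
    have hcwball : (starRingEnd ℂ) w ∈ Metric.ball (z₀:ℂ) ρ₂ := hconjmem w hwball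
    have hwr : w ∈ Metric.ball (z₀:ℂ) r :=
      Metric.ball_subset_ball (by linarith) hwball
    have hcweq : ((starRingEnd ℂ) w - (z₀:ℂ))^2 = (ε:ℂ) * h ((starRingEnd ℂ) w) := by
      calc ((starRingEnd ℂ) w - (z₀:ℂ))^2 = (starRingEnd ℂ) ((w - (z₀:ℂ))^2) := by
            rw [map_pow, map_sub, Complex.conj_ofReal]
        _ = (starRingEnd ℂ) ((ε:ℂ) * h w) := by rw [hweq]
        _ = (ε:ℂ) * (starRingEnd ℂ) (h w) := by rw [map_mul, Complex.conj_ofReal]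
        _ = (ε:ℂ) * h ((starRingEnd ℂ) w) := by rw [hrefl w hwr]
    have hcwfix : (starRingEnd ℂ) w = (z₀:ℂ) + (-((q:ℝ):ℂ)) * s ((starRingEnd ℂ) w) := by
      rcases hfactor _ hcwball hcweq with h'' | h''
      · exfalso
        have heqw := unique_fp _ habsq _ (Metric.ball_subset_closedBall hcwball) w hwcb h'' hwfix
        have := congrArg Complex.im heqw
        rw [Complex.conj_im] at this
        exact hwim (by linarith)
      · exact h''
    refine ⟨w, (starRingEnd ℂ) w, ?_, ⟨hwball, hweq⟩, ⟨hcwball, hcweq⟩, ?_, ?_, ?_⟩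
    · intro e
      have := congrArg Complex.im e
      rw [Complex.conj_im] at this
      exact hwim (by linarith)
    · intro z hz heqz
      rcases hfactor z hz heqz with h' | h'
      · left; exact unique_fp _ habsq z (Metric.ball_subset_closedBall hz) w hwcb h' hwfix
      · right
        exact unique_fp _ habsnq z (Metric.ball_subset_closedBall hz) _
          (Metric.ball_subset_closedBall hcwball) h' hcwfix
    · intro hpos; exact absurd hpos (not_lt.2 hcneg.le)
    · intro _; exact ⟨hwim, rfl⟩
  · -- h z₀ > 0 : two real solutions
    set S : Set ℂ := {z : ℂ | z.im = 0} with hSdef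
    have hSclosed : IsClosed S := isClosed_eq Complex.continuous_im continuous_const
    have hz₀S : (z₀:ℂ) ∈ S := by simp [hSdef]
    have hsreal : ∀ z ∈ Metric.closedBall (z₀:ℂ) ρ₁, z.im = 0 → (s z).im = 0 := by
      intro z hz him
      have hzx : z = ((z.re : ℝ) : ℂ) := Complex.ext rfl (by simp [him])
      have hhz : (h z).im = 0 := by
        rw [hzx]
        exact hreal z.re (by rw [← hzx]; exact (Metric.closedBall_subset_closedBall hρ₁r.le) hz)
      have hhzx : h z = (((h z).re : ℝ) : ℂ) := Complex.ext rfl (by simp [hhz])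
      set t : ℝ := (h z).re / c with htdef
      have hφx : h z / (c:ℂ) = ((t : ℝ) : ℂ) := by
        rw [htdef, Complex.ofReal_div, ← hhzx]
      have htpos : 0 < t := by
        have h1 := hφre z hz
        rw [hφx, Complex.ofReal_re] at h1
        linarith
      have hlog : Complex.log (h z / (c:ℂ)) = ((Real.log t : ℝ) : ℂ) := by
        rw [hφx, ← Complex.ofReal_log htpos.le]
      have him0 : (Complex.exp (((Real.log t : ℝ) : ℂ) / 2)).im = 0 := by
        rw [show (((Real.log t : ℝ) : ℂ) / 2) = ((Real.log t / 2 : ℝ) : ℂ) by push_cast; ring,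
          ← Complex.ofReal_exp]
        exact Complex.ofReal_im _
      rw [hsdef]
      show (s₀ * Complex.exp (Complex.log (h z / (c:ℂ)) / 2)).im = 0
      rw [hs₀def, if_pos hcpos, hlog]
      simp [Complex.mul_im, him0]
    have hTS : ∀ σ : ℂ, σ.im = 0 → ∀ z ∈ Metric.closedBall (z₀:ℂ) ρ₂ ∩ S,
        (z₀:ℂ) + σ * s z ∈ S := by
      intro σ hσim z hz
      have h1 : (s z).im = 0 := hsreal z (hcbsub hz.1) hz.2
      simp [hSdef, Set.mem_setOf_eq, Complex.add_im, Complex.mul_im, h1, hσim]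
    obtain ⟨w₁, ⟨hw₁cb, hw₁S⟩, hw₁fix, hw₁dist⟩ := exists_fp ((q:ℝ):ℂ) habsq S hSclosed hz₀S
      (hTS _ (Complex.ofReal_im q))
    obtain ⟨w₂, ⟨hw₂cb, hw₂S⟩, hw₂fix, hw₂dist⟩ := exists_fp (-((q:ℝ):ℂ)) habsnq S hSclosed hz₀S
      (hTS _ (by simp))
    have hw₁ball : w₁ ∈ Metric.ball (z₀:ℂ) ρ₂ := by
      rw [Metric.mem_ball]; exact lt_of_le_of_lt hw₁dist hq1
    have hw₂ball : w₂ ∈ Metric.ball (z₀:ℂ) ρ₂ := by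
      rw [Metric.mem_ball]; exact lt_of_le_of_lt hw₂dist hq1
    have hw₁eq : (w₁ - (z₀:ℂ))^2 = (ε:ℂ) * h w₁ := by
      have h1 : w₁ - (z₀:ℂ) = ((q:ℝ):ℂ) * s w₁ := by linear_combination hw₁fix
      rw [h1, mul_pow]; exact hεsub w₁ hw₁cb
    have hw₂eq : (w₂ - (z₀:ℂ))^2 = (ε:ℂ) * h w₂ := by
      have h1 : w₂ - (z₀:ℂ) = (-((q:ℝ):ℂ)) * s w₂ := by linear_combination hw₂fix
      rw [h1]
      rw [show ((-((q:ℝ):ℂ)) * s w₂)^2 = ((q:ℝ):ℂ)^2 * (s w₂)^2 by ring]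
      exact hεsub w₂ hw₂cb
    have hne12 : w₁ ≠ w₂ := by
      intro e
      have h2 : (z₀:ℂ) + ((q:ℝ):ℂ) * s w₁ = (z₀:ℂ) + (-((q:ℝ):ℂ)) * s w₁ := by
        rw [← hw₁fix, e]; exact hw₂fix
      have h3 : (2 : ℂ) * ((q:ℝ):ℂ) * s w₁ = 0 := by linear_combination h2
      have h4 : s w₁ = 0 := by
        rcases mul_eq_zero.1 h3 with h' | h'
        · exfalso
          rcases mul_eq_zero.1 h' with h'' | h''
          · norm_num at h''
          · exact Complex.ofReal_ne_zero.mpr hq0.ne' h''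
        · exact h'
      exact hsne w₁ (hcbsub hw₁cb) h4
    refine ⟨w₁, w₂, hne12, ⟨hw₁ball, hw₁eq⟩, ⟨hw₂ball, hw₂eq⟩, ?_, ?_, ?_⟩
    · intro z hz heqz
      rcases hfactor z hz heqz with h' | h'
      · left; exact unique_fp _ habsq z (Metric.ball_subset_closedBall hz) w₁ hw₁cb h' hw₁fix
      · right; exact unique_fp _ habsnq z (Metric.ball_subset_closedBall hz) w₂ hw₂cb h' hw₂fix
    · intro _; exact ⟨hw₁S, hw₂S⟩
    · intro hneg; exact absurd hneg (not_lt.2 hcpos.le)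
end
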